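/- Wasserstein-2 distance bounded by total variation plus tails: let q and p be probability measures on ℝ^d with finite second moments, let r > 0, and let B_r := {y ∈ ℝ^d : ‖y‖ ≤ r}. Then W₂²(q,p) ≤ 4r²·‖q − p‖_TV + 2∫_{B_r^c} ‖y‖² dq(y) + 2∫_{B_r^c} ‖y‖² dp(y) + 2(1 − p(B_r))·∫ ‖y‖² dq(y) + 2(1 − q(B_r))·∫ ‖y‖² dp(y). -/

import Mathlib

open MeasureTheory ProbabilityTheory Real
open scoped ENNReal NNReal Classical

noncomputable section

/-- Kullback–Leibler divergence (in nats), valued in `ℝ≥0∞`. -/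
def klDiv' {α : Type*} [MeasurableSpace α] (μ ν : Measure α) : ℝ≥0∞ :=
  if μ ≪ ν ∧ Integrable (llr μ ν) μ then ENNReal.ofReal (∫ x, llr μ ν x ∂μ) else ∞

/-- Mutual information (in nats) of a joint probability measure on a product space.
The mutual information in bits is this quantity divided by `Real.log 2`. -/
def mutualInfo {α β : Type*} [MeasurableSpace α] [MeasurableSpace β]
    (μ : Measure (α × β)) : ℝ≥0∞ :=
  klDiv' μ ((μ.map Prod.fst).prod (μ.map Prod.snd))

/-- `μ` is a coupling of `p` and `q`. -/
def IsCoupling {α β : Type*} [MeasurableSpace α] [MeasurableSpace β]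
    (μ : Measure (α × β)) (p : Measure α) (q : Measure β) : Prop :=
  μ.map Prod.fst = p ∧ μ.map Prod.snd = q

/-- Under `μ`, the conditional expectation of the first coordinate given the σ-algebra
generated by the second coordinate equals the second coordinate a.s. -/
def MMSEProp {E : Type*} [MeasurableSpace E] [NormedAddCommGroup E] [NormedSpace ℝ E]
    [CompleteSpace E] (μ : Measure (E × E)) : Prop :=
  μ[(fun z => z.1) | MeasurableSpace.comap (Prod.snd : E × E → E) inferInstance]
    =ᵐ[μ] fun z => z.2

/-- The single-letter distortion-rate-perception function `D(R,C,P)`. -/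
def DRCP {E : Type*} [MeasurableSpace E] [NormedAddCommGroup E] [NormedSpace ℝ E]
    [CompleteSpace E] (p : Measure E) (R C P : ℝ) : ℝ :=
  sInf { d : ℝ | ∃ (q : Measure E) (μ ν : Measure (E × E)),
    IsProbabilityMeasure q ∧ IsCoupling μ p q ∧ IsCoupling ν p q ∧
    MMSEProp μ ∧
    mutualInfo μ ≤ ENNReal.ofReal (R * Real.log 2) ∧
    mutualInfo ν ≤ ENNReal.ofReal ((R + C) * Real.log 2) ∧
    Integrable (fun z => ‖z.1 - z.2‖ ^ 2) μ ∧
    Integrable (fun z => ‖z.1 - z.2‖ ^ 2) ν ∧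
    d = ∫ z, ‖z.1 - z.2‖ ^ 2 ∂μ
        + (max (Real.sqrt (∫ z, ‖z.1 - z.2‖ ^ 2 ∂ν) - Real.sqrt P) 0) ^ 2 }

/-- Squared Wasserstein-2 distance (valued in `ℝ≥0∞`) between measures on a normed space,
with cost `‖y − y'‖²`. -/
def W2sq {α : Type*} [MeasurableSpace α] [NormedAddCommGroup α]
    (p q : Measure α) : ℝ≥0∞ :=
  ⨅ (μ : Measure (α × α)) (_ : IsCoupling μ p q),
    ∫⁻ z, ENNReal.ofReal (‖z.1 - z.2‖ ^ 2) ∂μ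

/-- The total variation distance `sup_E (q(E) − p(E))` between probability measures. -/
def tvDist {α : Type*} [MeasurableSpace α] (q p : Measure α) : ℝ :=
  sSup { d : ℝ | ∃ E : Set α, MeasurableSet E ∧ d = (q E).toReal - (p E).toReal }

lemma aux_prod_lintegral {α : Type*} [MeasurableSpace α] (μ ν : Measure α) [SFinite μ] [SFinite ν]
    (N : α → ℝ≥0∞) (hN : Measurable N) :
    ∫⁻ z, (2 * N z.1 + 2 * N z.2) ∂(μ.prod ν)
      = 2 * (∫⁻ x, N x ∂μ) * ν Set.univ + 2 * μ Set.univ * ∫⁻ x, N x ∂ν := by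
  have m1 : Measurable fun z : α × α => N z.1 := hN.comp measurable_fst
  have m2 : Measurable fun z : α × α => N z.2 := hN.comp measurable_snd
  rw [lintegral_add_left (m1.const_mul 2),
    lintegral_const_mul 2 m1,
    lintegral_const_mul 2 m2,
    ← lintegral_map hN measurable_fst, ← lintegral_map hN measurable_snd,
    Measure.map_fst_prod, Measure.map_snd_prod, lintegral_smul_measure, lintegral_smul_measure]
  ring

lemma aux_arith (R aq ap bq bp Iq Ip IqB Kp Lq Lp dlt : ℝ≥0∞)
    (h1 : aq + bq = dlt) (h2 : ap + bp = dlt)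
    (hIqB : IqB ≤ R * aq) (hKp : Kp ≤ R * ap + Ip)
    (hIq : Iq ≤ Lq) (hIp : Ip ≤ Lp)
    (hd0 : dlt ≠ 0) (hdt : dlt ≠ ⊤) :
    dlt⁻¹ * (4 * R * (aq * ap) + (2 * Iq * dlt + 2 * bq * Kp) + (2 * IqB * bp + 2 * aq * Ip))
      ≤ 4 * R * dlt + 2 * Lq + 2 * Lp := by
  have haq : aq ≤ dlt := h1 ▸ le_self_add
  have hap : ap ≤ dlt := h2 ▸ le_self_add
  have hKp' : Kp ≤ R * ap + Lp := hKp.trans (by gcongr)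
  have key : (4 * R * (aq * ap) + (2 * Iq * dlt + 2 * bq * Kp) + (2 * IqB * bp + 2 * aq * Ip))
      ≤ dlt * (4 * R * dlt + 2 * Lq + 2 * Lp) := by
    calc 4 * R * (aq * ap) + (2 * Iq * dlt + 2 * bq * Kp) + (2 * IqB * bp + 2 * aq * Ip)
        ≤ 4 * R * (aq * ap) + (2 * Lq * dlt + 2 * bq * (R * ap + Lp))
            + (2 * (R * aq) * bp + 2 * aq * Lp) := by
          gcongr
      _ = R * (2 * ap * (aq + bq) + 2 * aq * (ap + bp)) + 2 * Lq * dlt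
            + 2 * (bq + aq) * Lp := by ring
      _ = R * (2 * ap * dlt + 2 * aq * dlt) + 2 * Lq * dlt + 2 * dlt * Lp := by
          rw [h1, h2, add_comm bq aq, h1]
      _ ≤ R * (2 * dlt * dlt + 2 * dlt * dlt) + 2 * Lq * dlt + 2 * dlt * Lp := by gcongr
      _ = dlt * (4 * R * dlt + 2 * Lq + 2 * Lp) := by ring
  calc dlt⁻¹ * (4 * R * (aq * ap) + (2 * Iq * dlt + 2 * bq * Kp) + (2 * IqB * bp + 2 * aq * Ip))
      ≤ dlt⁻¹ * (dlt * (4 * R * dlt + 2 * Lq + 2 * Lp)) := by gcongr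
    _ = 4 * R * dlt + 2 * Lq + 2 * Lp := by
        rw [← mul_assoc, ENNReal.inv_mul_cancel hd0 hdt, one_mul]

set_option maxHeartbeats 1000000 in
/-- **Wasserstein-2 bounded by total variation plus tails**. -/
theorem w2sq_le_tv_add_tails (d : ℕ) (q p : Measure (EuclideanSpace ℝ (Fin d)))
    [IsProbabilityMeasure q] [IsProbabilityMeasure p]
    (hq2 : Integrable (fun y => ‖y‖ ^ 2) q) (hp2 : Integrable (fun y => ‖y‖ ^ 2) p)
    (r : ℝ) (hr : 0 < r) :
    W2sq q p
      ≤ ENNReal.ofReal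
          (4 * r ^ 2 * tvDist q p
            + 2 * ∫ y in (Metric.closedBall (0 : EuclideanSpace ℝ (Fin d)) r)ᶜ, ‖y‖ ^ 2 ∂q
            + 2 * ∫ y in (Metric.closedBall (0 : EuclideanSpace ℝ (Fin d)) r)ᶜ, ‖y‖ ^ 2 ∂p
            + 2 * (1 - (p (Metric.closedBall 0 r)).toReal) * ∫ y, ‖y‖ ^ 2 ∂q
            + 2 * (1 - (q (Metric.closedBall 0 r)).toReal) * ∫ y, ‖y‖ ^ 2 ∂p) := by
  classical
  set B := Metric.closedBall (0 : EuclideanSpace ℝ (Fin d)) r with hBdef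
  have hBmeas : MeasurableSet B := measurableSet_closedBall
  set F : (EuclideanSpace ℝ (Fin d) × EuclideanSpace ℝ (Fin d)) → ℝ≥0∞ :=
    fun z => ENNReal.ofReal (‖z.1 - z.2‖ ^ 2) with hFdef
  have hFmeas : Measurable F :=
    ((measurable_fst.sub measurable_snd).norm.pow_const 2).ennreal_ofReal
  set N : EuclideanSpace ℝ (Fin d) → ℝ≥0∞ := fun y => ENNReal.ofReal (‖y‖ ^ 2) with hNdef
  have hNmeas : Measurable N := (measurable_norm.pow_const 2).ennreal_ofReal
  have hdiag : Measurable (fun y : EuclideanSpace ℝ (Fin d) => (y, y)) :=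
    measurable_id.prodMk measurable_id
  have key : ∀ μ : Measure (EuclideanSpace ℝ (Fin d) × EuclideanSpace ℝ (Fin d)),
      IsCoupling μ q p → W2sq q p ≤ ∫⁻ z, F z ∂μ := by
    intro μ hμ
    exact iInf₂_le μ hμ
  -- decomposition of q and p into common part `m` and remainders `q0`, `p0`
  set lam : Measure (EuclideanSpace ℝ (Fin d)) := q + p with hlam
  have hq_ac : q ≪ lam := by
    rw [hlam]; exact Measure.absolutelyContinuous_of_le (Measure.le_add_right le_rfl)
  have hp_ac : p ≪ lam := by
    rw [hlam]; exact Measure.absolutelyContinuous_of_le (Measure.le_add_left le_rfl)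
  haveI : q.HaveLebesgueDecomposition lam := by rw [hlam]; exact Measure.haveLebesgueDecomposition_of_finiteMeasure
  haveI : p.HaveLebesgueDecomposition lam := by rw [hlam]; exact Measure.haveLebesgueDecomposition_of_finiteMeasure
  set f := q.rnDeriv lam with hfdef
  set g := p.rnDeriv lam with hgdef
  have hf : Measurable f := Measure.measurable_rnDeriv q lam
  have hg : Measurable g := Measure.measurable_rnDeriv p lam
  have hmin_meas : Measurable (fun x => min (f x) (g x)) := hf.min hg
  have hqs_meas : Measurable (fun x => f x - min (f x) (g x)) := hf.sub hmin_meas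
  have hps_meas : Measurable (fun x => g x - min (f x) (g x)) := hg.sub hmin_meas
  set m := lam.withDensity (fun x => min (f x) (g x)) with hmdef
  set q0 := lam.withDensity (fun x => f x - min (f x) (g x)) with hq0def
  set p0 := lam.withDensity (fun x => g x - min (f x) (g x)) with hp0def
  have hmq : m + q0 = q := by
    rw [hmdef, hq0def, ← withDensity_add_right _ hqs_meas]
    rw [show ((fun x => min (f x) (g x)) + fun x => f x - min (f x) (g x)) = f by
      funext x
      simp only [Pi.add_apply]
      exact add_tsub_cancel_of_le (min_le_left _ _)]
    exact Measure.withDensity_rnDeriv_eq q lam hq_ac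
  have hmp : m + p0 = p := by
    rw [hmdef, hp0def, ← withDensity_add_right _ hps_meas]
    rw [show ((fun x => min (f x) (g x)) + fun x => g x - min (f x) (g x)) = g by
      funext x
      simp only [Pi.add_apply]
      exact add_tsub_cancel_of_le (min_le_right _ _)]
    exact Measure.withDensity_rnDeriv_eq p lam hp_ac
  have hq0_le : q0 ≤ q := by
    rw [← hmq]
    exact Measure.le_iff'.mpr fun s => by rw [Measure.add_apply]; exact le_add_self
  have hp0_le : p0 ≤ p := by
    rw [← hmp]
    exact Measure.le_iff'.mpr fun s => by rw [Measure.add_apply]; exact le_add_self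
  haveI : IsFiniteMeasure q0 :=
    ⟨lt_of_le_of_lt (Measure.le_iff'.mp hq0_le Set.univ)
      (by rw [(measure_univ : q Set.univ = 1)]; exact ENNReal.one_lt_top)⟩
  haveI : IsFiniteMeasure p0 :=
    ⟨lt_of_le_of_lt (Measure.le_iff'.mp hp0_le Set.univ)
      (by rw [(measure_univ : p Set.univ = 1)]; exact ENNReal.one_lt_top)⟩
  have hδle : q0 Set.univ ≤ 1 := by
    have := Measure.le_iff'.mp hq0_le Set.univ
    rwa [(measure_univ : q Set.univ = 1)] at this
  have hδtop : q0 Set.univ ≠ ⊤ := (lt_of_le_of_lt hδle ENNReal.one_lt_top).ne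
  have h1 : m Set.univ + q0 Set.univ = 1 := by
    rw [← Measure.add_apply, hmq, measure_univ]
  have h2 : m Set.univ + p0 Set.univ = 1 := by
    rw [← Measure.add_apply, hmp, measure_univ]
  have hmtop : m Set.univ ≠ ⊤ := by
    intro h
    rw [h] at h1
    exact (by simp : (⊤ : ℝ≥0∞) + q0 Set.univ ≠ 1) h1
  have hδp : p0 Set.univ = q0 Set.univ :=
    (ENNReal.add_right_inj hmtop).mp (h2.trans h1.symm)
  by_cases hδ0 : q0 Set.univ = 0
  · -- here q = p; use the diagonal coupling, which has zero cost
    have hq0z : q0 = 0 := Measure.measure_univ_eq_zero.mp hδ0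
    have hp0z : p0 = 0 := Measure.measure_univ_eq_zero.mp (hδp.trans hδ0)
    have hqp : q = p := by rw [← hmq, ← hmp, hq0z, hp0z]
    have hcoup : IsCoupling (q.map (fun y => (y, y))) q p := by
      constructor
      · rw [Measure.map_map measurable_fst hdiag]
        exact Measure.map_id
      · rw [Measure.map_map measurable_snd hdiag, hqp]
        exact Measure.map_id
    refine le_trans (key _ hcoup) (le_trans (le_of_eq ?_) zero_le)
    rw [lintegral_map hFmeas hdiag]
    simp [hFdef]
  · -- main case
    set dlt := q0 Set.univ with hdlt
    set μ : Measure (EuclideanSpace ℝ (Fin d) × EuclideanSpace ℝ (Fin d)) :=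
      m.map (fun y => (y, y)) + dlt⁻¹ • (q0.prod p0) with hμdef
    have hfstdiag : (Prod.fst ∘ fun y : EuclideanSpace ℝ (Fin d) => (y, y)) = id := rfl
    have hsnddiag : (Prod.snd ∘ fun y : EuclideanSpace ℝ (Fin d) => (y, y)) = id := rfl
    have hcancel : dlt⁻¹ * dlt = 1 := ENNReal.inv_mul_cancel hδ0 hδtop
    have hcoup : IsCoupling μ q p := by
      constructor
      · rw [hμdef, Measure.map_add _ _ measurable_fst, Measure.map_smul,
          Measure.map_map measurable_fst hdiag, hfstdiag, Measure.map_id,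
          Measure.map_fst_prod, hδp, smul_smul, hcancel, one_smul]
        exact hmq
      · rw [hμdef, Measure.map_add _ _ measurable_snd, Measure.map_smul,
          Measure.map_map measurable_snd hdiag, hsnddiag, Measure.map_id,
          Measure.map_snd_prod, ← hdlt, smul_smul, hcancel, one_smul]
        exact hmp
    have hcost : ∫⁻ z, F z ∂μ = dlt⁻¹ * ∫⁻ z, F z ∂(q0.prod p0) := by
      rw [hμdef, lintegral_add_measure, lintegral_smul_measure, lintegral_map hFmeas hdiag]
      have hz : ∀ y : EuclideanSpace ℝ (Fin d), F (y, y) = 0 := by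
        intro y; simp [hFdef]
      simp [hz]
    -- pointwise bound by indicators
    set G : (EuclideanSpace ℝ (Fin d) × EuclideanSpace ℝ (Fin d)) → ℝ≥0∞ :=
      fun z => 2 * N z.1 + 2 * N z.2 with hGdef
    have hGmeas : Measurable G :=
      ((hNmeas.comp measurable_fst).const_mul 2).add ((hNmeas.comp measurable_snd).const_mul 2)
    set cB : (EuclideanSpace ℝ (Fin d) × EuclideanSpace ℝ (Fin d)) → ℝ≥0∞ :=
      (B ×ˢ B).indicator (fun _ => ENNReal.ofReal (4 * r ^ 2)) with hcBdef
    set c1 : (EuclideanSpace ℝ (Fin d) × EuclideanSpace ℝ (Fin d)) → ℝ≥0∞ :=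
      (Bᶜ ×ˢ (Set.univ : Set (EuclideanSpace ℝ (Fin d)))).indicator G with hc1def
    set c2 : (EuclideanSpace ℝ (Fin d) × EuclideanSpace ℝ (Fin d)) → ℝ≥0∞ :=
      (B ×ˢ Bᶜ).indicator G with hc2def
    have hcBmeas : Measurable cB := measurable_const.indicator (hBmeas.prod hBmeas)
    have hc1meas : Measurable c1 := hGmeas.indicator (hBmeas.compl.prod MeasurableSet.univ)
    have hc2meas : Measurable c2 := hGmeas.indicator (hBmeas.prod hBmeas.compl)
    have hFG : ∀ z : EuclideanSpace ℝ (Fin d) × EuclideanSpace ℝ (Fin d), F z ≤ G z := by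
      intro z
      have h : ‖z.1 - z.2‖ ^ 2 ≤ 2 * ‖z.1‖ ^ 2 + 2 * ‖z.2‖ ^ 2 := by
        nlinarith [norm_sub_le z.1 z.2, norm_nonneg z.1, norm_nonneg z.2,
          sq_nonneg (‖z.1‖ - ‖z.2‖), norm_nonneg (z.1 - z.2)]
      calc F z ≤ ENNReal.ofReal (2 * ‖z.1‖ ^ 2 + 2 * ‖z.2‖ ^ 2) := ENNReal.ofReal_le_ofReal h
        _ = 2 * N z.1 + 2 * N z.2 := by
            rw [ENNReal.ofReal_add (by positivity) (by positivity),
              ENNReal.ofReal_mul (by norm_num : (0:ℝ) ≤ 2),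
              ENNReal.ofReal_mul (by norm_num : (0:ℝ) ≤ 2), ENNReal.ofReal_ofNat]
        _ = G z := rfl
    have hpt : ∀ z : EuclideanSpace ℝ (Fin d) × EuclideanSpace ℝ (Fin d),
        F z ≤ cB z + c1 z + c2 z := by
      intro z
      by_cases h1' : z.1 ∈ B
      · by_cases h2' : z.2 ∈ B
        · have hz1 : ‖z.1‖ ≤ r := mem_closedBall_zero_iff.mp h1'
          have hz2 : ‖z.2‖ ≤ r := mem_closedBall_zero_iff.mp h2'
          have h : ‖z.1 - z.2‖ ^ 2 ≤ 4 * r ^ 2 := by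
            nlinarith [norm_sub_le z.1 z.2, norm_nonneg (z.1 - z.2)]
          have hmem : z ∈ B ×ˢ B := Set.mem_prod.mpr ⟨h1', h2'⟩
          have hceq : cB z = ENNReal.ofReal (4 * r ^ 2) := by
            rw [hcBdef]; exact Set.indicator_of_mem hmem _
          have : F z ≤ cB z := by rw [hceq]; exact ENNReal.ofReal_le_ofReal h
          exact this.trans (le_add_right (le_add_right le_rfl))
        · have hmem : z ∈ B ×ˢ Bᶜ := Set.mem_prod.mpr ⟨h1', h2'⟩
          have hceq : c2 z = G z := by
            rw [hc2def]; exact Set.indicator_of_mem hmem _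
          have : F z ≤ c2 z := by rw [hceq]; exact hFG z
          exact this.trans (le_add_left le_rfl)
      · have hmem : z ∈ Bᶜ ×ˢ (Set.univ : Set (EuclideanSpace ℝ (Fin d))) :=
          Set.mem_prod.mpr ⟨h1', Set.mem_univ _⟩
        have hceq : c1 z = G z := by
          rw [hc1def]; exact Set.indicator_of_mem hmem _
        have : F z ≤ c1 z := by rw [hceq]; exact hFG z
        exact this.trans (le_add_right (le_add_left le_rfl))
    have hsplit : ∫⁻ z, F z ∂(q0.prod p0)
        ≤ ∫⁻ z, cB z ∂(q0.prod p0) + ∫⁻ z, c1 z ∂(q0.prod p0) + ∫⁻ z, c2 z ∂(q0.prod p0) := by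
      calc ∫⁻ z, F z ∂(q0.prod p0) ≤ ∫⁻ z, (cB z + c1 z + c2 z) ∂(q0.prod p0) :=
            lintegral_mono hpt
        _ = _ := by
            rw [lintegral_add_left (f := fun z => cB z + c1 z) (hcBmeas.add hc1meas), lintegral_add_left hcBmeas]
    have hIB : ∫⁻ z, cB z ∂(q0.prod p0) = ENNReal.ofReal (4 * r ^ 2) * (q0 B * p0 B) := by
      rw [hcBdef, lintegral_indicator (hBmeas.prod hBmeas), setLIntegral_const,
        Measure.prod_prod]
    have hI1 : ∫⁻ z, c1 z ∂(q0.prod p0)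
        = 2 * (∫⁻ y in Bᶜ, N y ∂q0) * p0 Set.univ + 2 * q0 Bᶜ * ∫⁻ y, N y ∂p0 := by
      rw [hc1def, lintegral_indicator (hBmeas.compl.prod MeasurableSet.univ),
        ← Measure.prod_restrict, Measure.restrict_univ, hGdef,
        aux_prod_lintegral _ _ N hNmeas, Measure.restrict_apply_univ]
    have hI2 : ∫⁻ z, c2 z ∂(q0.prod p0)
        = 2 * (∫⁻ y in B, N y ∂q0) * p0 Bᶜ + 2 * q0 B * ∫⁻ y in Bᶜ, N y ∂p0 := by
      rw [hc2def, lintegral_indicator (hBmeas.prod hBmeas.compl),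
        ← Measure.prod_restrict, hGdef, aux_prod_lintegral _ _ N hNmeas,
        Measure.restrict_apply_univ, Measure.restrict_apply_univ]
    -- the various bounds
    have h4R : ENNReal.ofReal (4 * r ^ 2) = 4 * ENNReal.ofReal (r ^ 2) := by
      rw [ENNReal.ofReal_mul (by norm_num : (0:ℝ) ≤ 4), ENNReal.ofReal_ofNat]
    have hNB : ∀ y ∈ B, N y ≤ ENNReal.ofReal (r ^ 2) := by
      intro y hy
      exact ENNReal.ofReal_le_ofReal
        (pow_le_pow_left₀ (norm_nonneg y) (mem_closedBall_zero_iff.mp hy) 2)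
    have hIqB : ∫⁻ y in B, N y ∂q0 ≤ ENNReal.ofReal (r ^ 2) * q0 B := by
      calc ∫⁻ y in B, N y ∂q0 ≤ ∫⁻ _ in B, ENNReal.ofReal (r ^ 2) ∂q0 :=
            setLIntegral_mono measurable_const hNB
        _ = ENNReal.ofReal (r ^ 2) * q0 B := setLIntegral_const _ _
    have hIpB : ∫⁻ y in B, N y ∂p0 ≤ ENNReal.ofReal (r ^ 2) * p0 B := by
      calc ∫⁻ y in B, N y ∂p0 ≤ ∫⁻ _ in B, ENNReal.ofReal (r ^ 2) ∂p0 :=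
            setLIntegral_mono measurable_const hNB
        _ = ENNReal.ofReal (r ^ 2) * p0 B := setLIntegral_const _ _
    have hKp : ∫⁻ y, N y ∂p0 ≤ ENNReal.ofReal (r ^ 2) * p0 B + ∫⁻ y in Bᶜ, N y ∂p0 := by
      rw [← lintegral_add_compl N hBmeas (μ := p0)]
      gcongr
    have hIq : ∫⁻ y in Bᶜ, N y ∂q0 ≤ ∫⁻ y in Bᶜ, N y ∂q :=
      lintegral_mono' (Measure.restrict_mono subset_rfl hq0_le) le_rfl
    have hIp : ∫⁻ y in Bᶜ, N y ∂p0 ≤ ∫⁻ y in Bᶜ, N y ∂p :=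
      lintegral_mono' (Measure.restrict_mono subset_rfl hp0_le) le_rfl
    have haqbq : q0 B + q0 Bᶜ = dlt := by
      rw [hdlt]; exact measure_add_measure_compl hBmeas
    have hapbp : p0 B + p0 Bᶜ = dlt := by
      rw [← hδp]; exact measure_add_measure_compl hBmeas
    have hbracket : ∫⁻ z, F z ∂(q0.prod p0)
        ≤ 4 * ENNReal.ofReal (r ^ 2) * (q0 B * p0 B)
          + (2 * (∫⁻ y in Bᶜ, N y ∂q0) * dlt + 2 * q0 Bᶜ * ∫⁻ y, N y ∂p0)
          + (2 * (∫⁻ y in B, N y ∂q0) * p0 Bᶜ + 2 * q0 B * ∫⁻ y in Bᶜ, N y ∂p0) := by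
      refine hsplit.trans (le_of_eq ?_)
      rw [hIB, hI1, hI2, hδp, h4R]
    have hmain : ∫⁻ z, F z ∂μ
        ≤ 4 * ENNReal.ofReal (r ^ 2) * dlt + 2 * (∫⁻ y in Bᶜ, N y ∂q)
          + 2 * (∫⁻ y in Bᶜ, N y ∂p) := by
      rw [hcost]
      refine le_trans (mul_le_mul_right hbracket _) ?_
      exact aux_arith (ENNReal.ofReal (r ^ 2)) (q0 B) (p0 B) (q0 Bᶜ) (p0 Bᶜ)
        (∫⁻ y in Bᶜ, N y ∂q0) (∫⁻ y in Bᶜ, N y ∂p0) (∫⁻ y in B, N y ∂q0)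
        (∫⁻ y, N y ∂p0) (∫⁻ y in Bᶜ, N y ∂q) (∫⁻ y in Bᶜ, N y ∂p) dlt
        haqbq hapbp hIqB hKp hIq hIp hδ0 hδtop
    -- total variation bound
    have hbdd : BddAbove {x : ℝ | ∃ E : Set (EuclideanSpace ℝ (Fin d)),
        MeasurableSet E ∧ x = (q E).toReal - (p E).toReal} := by
      refine ⟨1, ?_⟩
      rintro x ⟨E, hE, rfl⟩
      have hq1 : (q E).toReal ≤ 1 := by
        have := ENNReal.toReal_mono ENNReal.one_ne_top (prob_le_one (μ := q) (s := E))
        simpa using this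
      have hp1 : (0:ℝ) ≤ (p E).toReal := ENNReal.toReal_nonneg
      linarith
    have hT0 : 0 ≤ tvDist q p := by
      have hmem : (0:ℝ) ∈ {x : ℝ | ∃ E : Set (EuclideanSpace ℝ (Fin d)),
          MeasurableSet E ∧ x = (q E).toReal - (p E).toReal} :=
        ⟨∅, MeasurableSet.empty, by simp⟩
      exact le_csSup hbdd hmem
    have hδT : dlt.toReal ≤ tvDist q p := by
      set E : Set (EuclideanSpace ℝ (Fin d)) := {x | g x < f x} with hEdef
      have hEmeas : MeasurableSet E := measurableSet_lt hg hf
      have hp0E : p0 E = 0 := by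
        rw [hp0def, withDensity_apply _ hEmeas]
        have h0 : ∫⁻ x in E, (g x - min (f x) (g x)) ∂lam
            = ∫⁻ _ in E, (0 : ℝ≥0∞) ∂lam :=
          setLIntegral_congr_fun hEmeas
            ((fun x hx => by
              have hlt : g x < f x := hx
              simp [min_eq_right hlt.le]))
        rw [h0]
        simp
      have hq0Ec : q0 Eᶜ = 0 := by
        rw [hq0def, withDensity_apply _ hEmeas.compl]
        have h0 : ∫⁻ x in Eᶜ, (f x - min (f x) (g x)) ∂lam
            = ∫⁻ _ in Eᶜ, (0 : ℝ≥0∞) ∂lam :=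
          setLIntegral_congr_fun hEmeas.compl
            ((fun x hx => by
              have hnlt : ¬ g x < f x := hx
              have hfg : f x ≤ g x := le_of_not_gt hnlt
              simp [min_eq_left hfg]))
        rw [h0]
        simp
      have hq0E : q0 E = dlt := by
        rw [hdlt, ← measure_add_measure_compl hEmeas (μ := q0), hq0Ec, add_zero]
      have hqE : q E = p E + dlt := by
        have e1 : q E = m E + q0 E := by rw [← hmq, Measure.add_apply]
        have e2 : p E = m E + p0 E := by rw [← hmp, Measure.add_apply]
        rw [e1, e2, hp0E, add_zero, hq0E]
      have htr : (q E).toReal = (p E).toReal + dlt.toReal := by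
        rw [hqE, ENNReal.toReal_add (measure_ne_top p E) hδtop]
      have hmem : dlt.toReal ∈ {x : ℝ | ∃ E : Set (EuclideanSpace ℝ (Fin d)),
          MeasurableSet E ∧ x = (q E).toReal - (p E).toReal} :=
        ⟨E, hEmeas, by linarith⟩
      exact le_csSup hbdd hmem
    -- converting to reals
    have hLq : ENNReal.ofReal (∫ y in Bᶜ, ‖y‖ ^ 2 ∂q) = ∫⁻ y in Bᶜ, N y ∂q := by
      rw [hNdef]
      exact ofReal_integral_eq_lintegral_ofReal hq2.restrict
        (Filter.Eventually.of_forall fun y => sq_nonneg _)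
    have hLp : ENNReal.ofReal (∫ y in Bᶜ, ‖y‖ ^ 2 ∂p) = ∫⁻ y in Bᶜ, N y ∂p := by
      rw [hNdef]
      exact ofReal_integral_eq_lintegral_ofReal hp2.restrict
        (Filter.Eventually.of_forall fun y => sq_nonneg _)
    have hJq0 : 0 ≤ ∫ y in Bᶜ, ‖y‖ ^ 2 ∂q := integral_nonneg fun y => sq_nonneg _
    have hJp0 : 0 ≤ ∫ y in Bᶜ, ‖y‖ ^ 2 ∂p := integral_nonneg fun y => sq_nonneg _
    have hfinal : 4 * ENNReal.ofReal (r ^ 2) * dlt + 2 * (∫⁻ y in Bᶜ, N y ∂q)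
          + 2 * (∫⁻ y in Bᶜ, N y ∂p)
        ≤ ENNReal.ofReal
          (4 * r ^ 2 * tvDist q p
            + 2 * ∫ y in Bᶜ, ‖y‖ ^ 2 ∂q
            + 2 * ∫ y in Bᶜ, ‖y‖ ^ 2 ∂p
            + 2 * (1 - (p B).toReal) * ∫ y, ‖y‖ ^ 2 ∂q
            + 2 * (1 - (q B).toReal) * ∫ y, ‖y‖ ^ 2 ∂p) := by
      have e1 : 4 * ENNReal.ofReal (r ^ 2) * dlt = ENNReal.ofReal (4 * r ^ 2 * dlt.toReal) := by
        rw [ENNReal.ofReal_mul (by positivity : (0:ℝ) ≤ 4 * r ^ 2),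
          ENNReal.ofReal_toReal hδtop, ← h4R, h4R]
      have e2 : 2 * (∫⁻ y in Bᶜ, N y ∂q) = ENNReal.ofReal (2 * ∫ y in Bᶜ, ‖y‖ ^ 2 ∂q) := by
        rw [ENNReal.ofReal_mul (by norm_num : (0:ℝ) ≤ 2), hLq, ENNReal.ofReal_ofNat]
      have e3 : 2 * (∫⁻ y in Bᶜ, N y ∂p) = ENNReal.ofReal (2 * ∫ y in Bᶜ, ‖y‖ ^ 2 ∂p) := by
        rw [ENNReal.ofReal_mul (by norm_num : (0:ℝ) ≤ 2), hLp, ENNReal.ofReal_ofNat]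
      rw [e1, e2, e3, ← ENNReal.ofReal_add (by positivity) (by positivity),
        ← ENNReal.ofReal_add (by positivity) (by positivity)]
      refine ENNReal.ofReal_le_ofReal ?_
      have hpB : (p B).toReal ≤ 1 := by
        have := ENNReal.toReal_mono ENNReal.one_ne_top (prob_le_one (μ := p) (s := B))
        simpa using this
      have hqB : (q B).toReal ≤ 1 := by
        have := ENNReal.toReal_mono ENNReal.one_ne_top (prob_le_one (μ := q) (s := B))
        simpa using this
      have hIq2 : 0 ≤ ∫ y, ‖y‖ ^ 2 ∂q := integral_nonneg fun y => sq_nonneg _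
      have hIp2 : 0 ≤ ∫ y, ‖y‖ ^ 2 ∂p := integral_nonneg fun y => sq_nonneg _
      have hmul : 4 * r ^ 2 * dlt.toReal ≤ 4 * r ^ 2 * tvDist q p := by
        apply mul_le_mul_of_nonneg_left hδT (by positivity)
      nlinarith [mul_nonneg (sub_nonneg.mpr hpB) hIq2, mul_nonneg (sub_nonneg.mpr hqB) hIp2]
    exact (key μ hcoup).trans (hmain.trans hfinal)
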